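/- Suppose the IV assumptions and positivity hold, δ^D ≠ 0, U takes values in a finite subset 𝒰 of ℝ, and the two functions u ↦ E[Y1 − Y0 | U=u] and u ↦ ( E[D | Z=1, U=u] − E[D | Z=0, U=u] ) / δ^D are both nondecreasing on 𝒰 (or both nonincreasing on 𝒰). Then the Wald estimand upper-bounds the average treatment effect: δ^Y / δ^D ≥ E[Y1 − Y0]. -/

import Mathlib

open MeasureTheory ProbabilityTheory

lemma weighted_chebyshev (s : Finset ℝ) (p a b : ℝ → ℝ)
    (hp : ∀ u ∈ s, 0 ≤ p u) (hp1 : ∑ u ∈ s, p u = 1)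
    (hco : ∀ u ∈ s, ∀ v ∈ s, 0 ≤ (a u - a v) * (b u - b v)) :
    (∑ u ∈ s, p u * a u) * (∑ u ∈ s, p u * b u) ≤ ∑ u ∈ s, p u * (a u * b u) := by
  have key : 0 ≤ ∑ u ∈ s, ∑ v ∈ s, p u * p v * ((a u - a v) * (b u - b v)) :=
    Finset.sum_nonneg fun u hu => Finset.sum_nonneg fun v hv =>
      mul_nonneg (mul_nonneg (hp u hu) (hp v hv)) (hco u hu v hv)
  have expand : ∑ u ∈ s, ∑ v ∈ s, p u * p v * ((a u - a v) * (b u - b v))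
      = 2 * (∑ u ∈ s, p u * (a u * b u))
        - 2 * ((∑ u ∈ s, p u * a u) * (∑ u ∈ s, p u * b u)) := by
    have h1 : ∀ u ∈ s, ∑ v ∈ s, p u * p v * ((a u - a v) * (b u - b v))
        = p u * (a u * b u) * (∑ v ∈ s, p v)
          - p u * a u * (∑ v ∈ s, p v * b v)
          - p u * b u * (∑ v ∈ s, p v * a v)
          + p u * (∑ v ∈ s, p v * (a v * b v)) := by
      intro u _
      simp only [Finset.mul_sum, ← Finset.sum_sub_distrib, ← Finset.sum_add_distrib]
      exact Finset.sum_congr rfl fun v _ => by ring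
    rw [Finset.sum_congr rfl h1]
    simp only [Finset.sum_add_distrib, Finset.sum_sub_distrib, ← Finset.sum_mul,
      ← Finset.mul_sum, hp1]
    ring
  linarith

lemma integral_cond' {Ω : Type*} [MeasurableSpace Ω] (μ : Measure Ω)
    (A : Set Ω) (f : Ω → ℝ) :
    ∫ ω, f ω ∂(μ[|A]) = ((μ A).toReal)⁻¹ * ∫ ω in A, f ω ∂μ := by
  rw [ProbabilityTheory.cond, integral_smul_measure, ENNReal.toReal_inv, smul_eq_mul]

lemma factor_on_cell {Ω : Type*} [MeasurableSpace Ω] (μ : Measure Ω) [IsProbabilityMeasure μ]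
    (W χ : Ω → ℝ) (A : Set Ω) (hApos : μ A ≠ 0)
    (hW : Integrable W μ) (hχmeas : Measurable χ) (hχbd : ∀ ω, ‖χ ω‖ ≤ 1)
    (hind : IndepFun W χ (μ[|A])) :
    ∫ ω in A, W ω * χ ω ∂μ
      = ((μ A).toReal)⁻¹ * ((∫ ω in A, W ω ∂μ) * ∫ ω in A, χ ω ∂μ) := by
  have hAfin : μ A ≠ ⊤ := measure_ne_top μ A
  have hpA : 0 < (μ A).toReal := ENNReal.toReal_pos hApos hAfin
  have hWc : Integrable W (μ[|A]) := by
    rw [ProbabilityTheory.cond]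
    exact (hW.restrict).smul_measure (ENNReal.inv_ne_top.2 hApos)
  have : IsProbabilityMeasure (μ[|A]) := cond_isProbabilityMeasure hApos
  have hχc : Integrable χ (μ[|A]) :=
    (integrable_const (1:ℝ)).mono' hχmeas.aestronglyMeasurable
      (Filter.Eventually.of_forall hχbd)
  have h := hind.integral_fun_mul_eq_mul_integral hWc.aestronglyMeasurable hχc.aestronglyMeasurable
  have h' : ((μ A).toReal)⁻¹ * ∫ ω in A, W ω * χ ω ∂μ
      = (((μ A).toReal)⁻¹ * ∫ ω in A, W ω ∂μ) * (((μ A).toReal)⁻¹ * ∫ ω in A, χ ω ∂μ) := by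
    rw [← integral_cond', ← integral_cond', ← integral_cond']; exact h
  have hcancel : (μ A).toReal * ((μ A).toReal)⁻¹ = 1 := mul_inv_cancel₀ hpA.ne'
  calc ∫ ω in A, W ω * χ ω ∂μ
      = (μ A).toReal * (((μ A).toReal)⁻¹ * ∫ ω in A, W ω * χ ω ∂μ) := by
        rw [← mul_assoc, hcancel, one_mul]
    _ = (μ A).toReal * ((((μ A).toReal)⁻¹ * ∫ ω in A, W ω ∂μ)
          * (((μ A).toReal)⁻¹ * ∫ ω in A, χ ω ∂μ)) := by rw [h']
    _ = _ := by field_simp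



/-- Conditional mean of `W` given event `A`: `E[W | A] = (∫_A W dμ) / μ(A)`. -/
noncomputable def condMean {Ω : Type*} [MeasurableSpace Ω] (μ : Measure Ω)
    (W : Ω → ℝ) (A : Set Ω) : ℝ :=
  (∫ ω in A, W ω ∂μ) / (μ A).toReal

/-- under the IV assumptions, positivity, `δ^D ≠ 0`, with `U` valued in a
finite subset `𝒰` of `ℝ`, if `u ↦ E[Y1 − Y0 | U=u]` and
`u ↦ (E[D | Z=1, U=u] − E[D | Z=0, U=u]) / δ^D` are both nondecreasing (or both
nonincreasing) on `𝒰`, then the Wald estimand upper-bounds the ATE: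
`δ^Y / δ^D ≥ E[Y1 − Y0]`. -/
theorem wald_upper_bounds_ate_of_comonotone
    {Ω : Type*} [MeasurableSpace Ω] (μ : Measure Ω) [IsProbabilityMeasure μ]
    (𝒰 : Finset ℝ)
    (Z D Y1 Y0 Y : Ω → ℝ) (U : Ω → ℝ)
    (hZmeas : Measurable Z) (hDmeas : Measurable D) (hUmeas : Measurable U)
    (hZ01 : ∀ ω, Z ω = 0 ∨ Z ω = 1) (hD01 : ∀ ω, D ω = 0 ∨ D ω = 1)
    (hUrange : ∀ ω, U ω ∈ 𝒰)
    (hY1int : Integrable Y1 μ) (hY0int : Integrable Y0 μ)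
    (hYdef : ∀ ω, Y ω = D ω * Y1 ω + (1 - D ω) * Y0 ω)
    (hUpos : ∀ u ∈ 𝒰, 0 < μ {ω | U ω = u})
    -- (A2) Z is independent of U
    (hA2 : ∀ (z : ℝ), ∀ u ∈ 𝒰,
      μ ({ω | Z ω = z} ∩ {ω | U ω = u}) = μ {ω | Z ω = z} * μ {ω | U ω = u})
    -- (A1′, A4) under μ(· | U = u), each potential outcome is independent of (Z, D)
    (hA14one : ∀ u ∈ 𝒰, IndepFun Y1 (fun ω => (Z ω, D ω)) (μ[|{ω | U ω = u}]))
    (hA14zero : ∀ u ∈ 𝒰, IndepFun Y0 (fun ω => (Z ω, D ω)) (μ[|{ω | U ω = u}]))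
    -- positivity
    (hPos : ∀ (z : ℝ), (z = 0 ∨ z = 1) → ∀ u ∈ 𝒰,
      0 < μ ({ω | Z ω = z} ∩ {ω | U ω = u}))
    -- δ^Y and δ^D
    (δY δD : ℝ)
    (hδY : δY = condMean μ Y {ω | Z ω = 1} - condMean μ Y {ω | Z ω = 0})
    (hδD : δD = condMean μ D {ω | Z ω = 1} - condMean μ D {ω | Z ω = 0})
    (hδDne : δD ≠ 0)
    -- a(u) and b(u)
    (a b : ℝ → ℝ)
    (ha : ∀ u ∈ 𝒰, a u = condMean μ (fun ω => Y1 ω - Y0 ω) {ω | U ω = u})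
    (hb : ∀ u ∈ 𝒰, b u =
      (condMean μ D ({ω | Z ω = 1} ∩ {ω | U ω = u})
        - condMean μ D ({ω | Z ω = 0} ∩ {ω | U ω = u})) / δD)
    -- both nondecreasing on 𝒰, or both nonincreasing on 𝒰
    (hMono : (∀ u ∈ 𝒰, ∀ v ∈ 𝒰, u ≤ v → a u ≤ a v ∧ b u ≤ b v)
      ∨ (∀ u ∈ 𝒰, ∀ v ∈ 𝒰, u ≤ v → a v ≤ a u ∧ b v ≤ b u)) :
    δY / δD ≥ ∫ ω, (Y1 ω - Y0 ω) ∂μ := by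
  classical
  have hAmeas : ∀ u : ℝ, MeasurableSet {ω | U ω = u} :=
    fun u => hUmeas (measurableSet_singleton u)
  have hBmeas : ∀ z : ℝ, MeasurableSet {ω | Z ω = z} :=
    fun z => hZmeas (measurableSet_singleton z)
  set p : ℝ → ℝ := fun u => (μ {ω | U ω = u}).toReal with hpdef
  have hppos : ∀ u ∈ 𝒰, 0 < p u := fun u hu =>
    ENNReal.toReal_pos (hUpos u hu).ne' (measure_ne_top μ _)
  -- partition lemma
  have hpart : ∀ (W : Ω → ℝ), Integrable W μ → ∀ S : Set Ω, MeasurableSet S →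
      ∫ ω in S, W ω ∂μ = ∑ u ∈ 𝒰, ∫ ω in S ∩ {ω | U ω = u}, W ω ∂μ := by
    intro W hW S hS
    have hcover : S = ⋃ u ∈ 𝒰, S ∩ {ω | U ω = u} := by
      ext ω
      simp only [Set.mem_iUnion, Set.mem_inter_iff, Set.mem_setOf_eq]
      exact ⟨fun h => ⟨U ω, hUrange ω, h, rfl⟩, fun ⟨u, _, h, _⟩ => h⟩
    conv_lhs => rw [hcover]
    exact integral_biUnion_finset 𝒰 (fun u _ => hS.inter (hAmeas u))
      (fun u _ v _ huv => by
        simp only [Function.onFun, Set.disjoint_left]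
        rintro ω ⟨-, h1⟩ ⟨-, h2⟩
        exact huv (h1 ▸ h2 ▸ rfl))
      (fun u _ => hW.integrableOn)
  have hsum_p : ∑ u ∈ 𝒰, p u = 1 := by
    have h := hpart (fun _ => (1:ℝ)) (integrable_const 1) Set.univ MeasurableSet.univ
    simpa [hpdef, Measure.real] using h.symm
  have h𝒰ne : 𝒰.Nonempty := by
    by_contra h
    rw [Finset.not_nonempty_iff_eq_empty] at h
    rw [h, Finset.sum_empty] at hsum_p
    norm_num at hsum_p
  have hrpos : ∀ z : ℝ, (z = 0 ∨ z = 1) → 0 < (μ {ω | Z ω = z}).toReal := by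
    intro z hz
    obtain ⟨u, hu⟩ := h𝒰ne
    have h1 := hPos z hz u hu
    have hle : μ ({ω | Z ω = z} ∩ {ω | U ω = u}) ≤ μ {ω | Z ω = z} :=
      measure_mono Set.inter_subset_left
    exact ENNReal.toReal_pos (fun h0 => by simp [h0] at hle; exact absurd hle (by simpa using h1.ne'))
      (measure_ne_top μ _)
  -- integrability
  have hDnorm : ∀ ω, ‖D ω‖ ≤ 1 := by
    intro ω; rcases hD01 ω with h | h <;> simp [h]
  have h1Dnorm : ∀ ω, ‖1 - D ω‖ ≤ 1 := by
    intro ω; rcases hD01 ω with h | h <;> simp [h]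
  have hDint : Integrable D μ :=
    (integrable_const (1:ℝ)).mono' hDmeas.aestronglyMeasurable
      (Filter.Eventually.of_forall hDnorm)
  have hDY1 : Integrable (fun ω => D ω * Y1 ω) μ :=
    hY1int.bdd_mul hDmeas.aestronglyMeasurable (Filter.Eventually.of_forall hDnorm)
  have h1DY0 : Integrable (fun ω => (1 - D ω) * Y0 ω) μ :=
    hY0int.bdd_mul (measurable_const.sub hDmeas).aestronglyMeasurable (Filter.Eventually.of_forall h1Dnorm)
  have hYint : Integrable Y μ := by
    have hYeq : Y = fun ω => D ω * Y1 ω + (1 - D ω) * Y0 ω := funext hYdef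
    rw [hYeq]; exact hDY1.add h1DY0
  -- factorization on cells, treated part
  have hcellD1 : ∀ (z : ℝ), ∀ u ∈ 𝒰,
      ∫ ω in {ω | Z ω = z} ∩ {ω | U ω = u}, D ω * Y1 ω ∂μ
        = ((p u)⁻¹ * ∫ ω in {ω | U ω = u}, Y1 ω ∂μ)
          * ∫ ω in {ω | Z ω = z} ∩ {ω | U ω = u}, D ω ∂μ := by
    intro z u hu
    have hχmeas : Measurable (fun ω => (if Z ω = z then (1:ℝ) else 0) * D ω) :=
      (Measurable.ite (hBmeas z) measurable_const measurable_const).mul hDmeas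
    have hχbd : ∀ ω, ‖(if Z ω = z then (1:ℝ) else 0) * D ω‖ ≤ 1 := by
      intro ω; rcases hD01 ω with h | h <;> by_cases hz : Z ω = z <;> simp [h, hz]
    have hg : Measurable (fun q : ℝ × ℝ => (if q.1 = z then (1:ℝ) else 0) * q.2) :=
      (Measurable.ite (measurable_fst (measurableSet_singleton z))
        measurable_const measurable_const).mul measurable_snd
    have hindep : IndepFun Y1 (fun ω => (if Z ω = z then (1:ℝ) else 0) * D ω)
        (μ[|{ω | U ω = u}]) := (hA14one u hu).comp measurable_id hg
    have hfac := factor_on_cell μ Y1 (fun ω => (if Z ω = z then (1:ℝ) else 0) * D ω)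
      {ω | U ω = u} (hUpos u hu).ne' hY1int hχmeas hχbd hindep
    have hind1 : (fun ω => Y1 ω * ((if Z ω = z then (1:ℝ) else 0) * D ω))
        = Set.indicator {ω | Z ω = z} (fun ω => D ω * Y1 ω) := by
      funext ω
      by_cases h : Z ω = z <;>
        simp [Set.indicator_apply, Set.mem_setOf_eq, h, mul_comm]
    have hind2 : (fun ω => (if Z ω = z then (1:ℝ) else 0) * D ω)
        = Set.indicator {ω | Z ω = z} D := by
      funext ω
      by_cases h : Z ω = z <;> simp [Set.indicator_apply, Set.mem_setOf_eq, h]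
    rw [hind1, hind2, setIntegral_indicator (hBmeas z),
      setIntegral_indicator (hBmeas z), Set.inter_comm] at hfac
    rw [hfac]
    ring
  -- factorization on cells, untreated part
  have hcellD0 : ∀ (z : ℝ), ∀ u ∈ 𝒰,
      ∫ ω in {ω | Z ω = z} ∩ {ω | U ω = u}, (1 - D ω) * Y0 ω ∂μ
        = ((p u)⁻¹ * ∫ ω in {ω | U ω = u}, Y0 ω ∂μ)
          * ∫ ω in {ω | Z ω = z} ∩ {ω | U ω = u}, (1 - D ω) ∂μ := by
    intro z u hu
    have hχmeas : Measurable (fun ω => (if Z ω = z then (1:ℝ) else 0) * (1 - D ω)) :=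
      (Measurable.ite (hBmeas z) measurable_const measurable_const).mul
        (measurable_const.sub hDmeas)
    have hχbd : ∀ ω, ‖(if Z ω = z then (1:ℝ) else 0) * (1 - D ω)‖ ≤ 1 := by
      intro ω; rcases hD01 ω with h | h <;> by_cases hz : Z ω = z <;> simp [h, hz]
    have hg : Measurable (fun q : ℝ × ℝ => (if q.1 = z then (1:ℝ) else 0) * (1 - q.2)) :=
      (Measurable.ite (measurable_fst (measurableSet_singleton z))
        measurable_const measurable_const).mul (measurable_const.sub measurable_snd)
    have hindep : IndepFun Y0 (fun ω => (if Z ω = z then (1:ℝ) else 0) * (1 - D ω))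
        (μ[|{ω | U ω = u}]) := (hA14zero u hu).comp measurable_id hg
    have hfac := factor_on_cell μ Y0 (fun ω => (if Z ω = z then (1:ℝ) else 0) * (1 - D ω))
      {ω | U ω = u} (hUpos u hu).ne' hY0int hχmeas hχbd hindep
    have hind1 : (fun ω => Y0 ω * ((if Z ω = z then (1:ℝ) else 0) * (1 - D ω)))
        = Set.indicator {ω | Z ω = z} (fun ω => (1 - D ω) * Y0 ω) := by
      funext ω
      by_cases h : Z ω = z <;>
        simp [Set.indicator_apply, Set.mem_setOf_eq, h, mul_comm]
    have hind2 : (fun ω => (if Z ω = z then (1:ℝ) else 0) * (1 - D ω))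
        = Set.indicator {ω | Z ω = z} (fun ω => 1 - D ω) := by
      funext ω
      by_cases h : Z ω = z <;> simp [Set.indicator_apply, Set.mem_setOf_eq, h]
    rw [hind1, hind2, setIntegral_indicator (hBmeas z),
      setIntegral_indicator (hBmeas z), Set.inter_comm] at hfac
    rw [hfac]
    ring
  -- integral of 1 - D over a cell
  have hI0 : ∀ (S : Set Ω), MeasurableSet S →
      ∫ ω in S, (1 - D ω) ∂μ = (μ S).toReal - ∫ ω in S, D ω ∂μ := by
    intro S hS
    rw [integral_sub (integrableOn_const (C := (1:ℝ)) (measure_ne_top μ S)) hDint.integrableOn]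
    simp [setIntegral_const, Measure.real]
  -- cell decomposition of Y
  have hYcell : ∀ (z : ℝ), ∀ u ∈ 𝒰,
      ∫ ω in {ω | Z ω = z} ∩ {ω | U ω = u}, Y ω ∂μ
        = ((p u)⁻¹ * ∫ ω in {ω | U ω = u}, Y0 ω ∂μ)
            * (μ ({ω | Z ω = z} ∩ {ω | U ω = u})).toReal
          + a u * ∫ ω in {ω | Z ω = z} ∩ {ω | U ω = u}, D ω ∂μ := by
    intro z u hu
    have hdecomp : ∫ ω in {ω | Z ω = z} ∩ {ω | U ω = u}, Y ω ∂μ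
        = ∫ ω in {ω | Z ω = z} ∩ {ω | U ω = u}, D ω * Y1 ω ∂μ
          + ∫ ω in {ω | Z ω = z} ∩ {ω | U ω = u}, (1 - D ω) * Y0 ω ∂μ := by
      rw [show Y = fun ω => D ω * Y1 ω + (1 - D ω) * Y0 ω from funext hYdef]
      exact integral_add hDY1.integrableOn h1DY0.integrableOn
    have ha' : a u = (p u)⁻¹ * (∫ ω in {ω | U ω = u}, Y1 ω ∂μ)
        - (p u)⁻¹ * ∫ ω in {ω | U ω = u}, Y0 ω ∂μ := by
      rw [ha u hu, condMean,
        integral_sub hY1int.integrableOn hY0int.integrableOn, sub_div]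
      rw [div_eq_inv_mul, div_eq_inv_mul]
    rw [hdecomp, hcellD1 z u hu, hcellD0 z u hu,
      hI0 _ ((hBmeas z).inter (hAmeas u)), ha']
    ring
  -- cell measure factorization
  have hq : ∀ (z : ℝ), ∀ u ∈ 𝒰,
      (μ ({ω | Z ω = z} ∩ {ω | U ω = u})).toReal = (μ {ω | Z ω = z}).toReal * p u := by
    intro z u hu
    rw [hA2 z u hu, ENNReal.toReal_mul]
  -- conditional mean of Y given Z = z
  have hEY : ∀ z : ℝ, (z = 0 ∨ z = 1) → condMean μ Y {ω | Z ω = z}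
      = ∑ u ∈ 𝒰, p u * (((p u)⁻¹ * ∫ ω in {ω | U ω = u}, Y0 ω ∂μ)
          + a u * condMean μ D ({ω | Z ω = z} ∩ {ω | U ω = u})) := by
    intro z hz
    rw [condMean, hpart Y hYint _ (hBmeas z), Finset.sum_div]
    refine Finset.sum_congr rfl fun u hu => ?_
    rw [hYcell z u hu, condMean, hq z u hu]
    have h1 : p u ≠ 0 := (hppos u hu).ne'
    have h2 : (μ {ω | Z ω = z}).toReal ≠ 0 := (hrpos z hz).ne'
    field_simp
  -- conditional mean of D given Z = z
  have hED : ∀ z : ℝ, (z = 0 ∨ z = 1) → condMean μ D {ω | Z ω = z}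
      = ∑ u ∈ 𝒰, p u * condMean μ D ({ω | Z ω = z} ∩ {ω | U ω = u}) := by
    intro z hz
    rw [condMean, hpart D hDint _ (hBmeas z), Finset.sum_div]
    refine Finset.sum_congr rfl fun u hu => ?_
    rw [condMean, hq z u hu]
    have h1 : p u ≠ 0 := (hppos u hu).ne'
    have h2 : (μ {ω | Z ω = z}).toReal ≠ 0 := (hrpos z hz).ne'
    field_simp
  -- δD identity
  have hbδ : ∀ u ∈ 𝒰, b u * δD
      = condMean μ D ({ω | Z ω = 1} ∩ {ω | U ω = u})
        - condMean μ D ({ω | Z ω = 0} ∩ {ω | U ω = u}) := by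
    intro u hu
    rw [hb u hu]
    field_simp
  have hδD2 : δD = δD * ∑ u ∈ 𝒰, p u * b u := by
    have key : condMean μ D {ω | Z ω = 1} - condMean μ D {ω | Z ω = 0}
        = δD * ∑ u ∈ 𝒰, p u * b u := by
      rw [hED 1 (Or.inr rfl), hED 0 (Or.inl rfl), ← Finset.sum_sub_distrib,
        Finset.mul_sum]
      refine Finset.sum_congr rfl fun u hu => ?_
      linear_combination (-(p u)) * (hbδ u hu)
    conv_lhs => rw [hδD]
    exact key
  have hsum_pb : ∑ u ∈ 𝒰, p u * b u = 1 := by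
    have h : δD * 1 = δD * ∑ u ∈ 𝒰, p u * b u := by rw [mul_one]; exact hδD2
    exact (mul_left_cancel₀ hδDne h).symm
  -- δY identity
  have hδY2 : δY = δD * ∑ u ∈ 𝒰, p u * (a u * b u) := by
    have key : condMean μ Y {ω | Z ω = 1} - condMean μ Y {ω | Z ω = 0}
        = δD * ∑ u ∈ 𝒰, p u * (a u * b u) := by
      rw [hEY 1 (Or.inr rfl), hEY 0 (Or.inl rfl), ← Finset.sum_sub_distrib,
        Finset.mul_sum]
      refine Finset.sum_congr rfl fun u hu => ?_
      linear_combination (-(p u * a u)) * (hbδ u hu)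
    rw [hδY]; exact key
  -- ATE identity
  have hATE : ∫ ω, (Y1 ω - Y0 ω) ∂μ = ∑ u ∈ 𝒰, p u * a u := by
    rw [← setIntegral_univ, hpart (fun ω => Y1 ω - Y0 ω) (hY1int.sub hY0int)
      Set.univ MeasurableSet.univ]
    refine Finset.sum_congr rfl fun u hu => ?_
    rw [Set.univ_inter, ha u hu, condMean]
    have h1 : p u ≠ 0 := (hppos u hu).ne'
    field_simp
    exact (mul_div_cancel_right₀ _ h1).symm
  -- comonotonicity
  have hco : ∀ u ∈ 𝒰, ∀ v ∈ 𝒰, 0 ≤ (a u - a v) * (b u - b v) := by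
    intro u hu v hv
    rcases le_total u v with h | h <;> rcases hMono with hM | hM
    · obtain ⟨h1, h2⟩ := hM u hu v hv h; nlinarith
    · obtain ⟨h1, h2⟩ := hM u hu v hv h; nlinarith
    · obtain ⟨h1, h2⟩ := hM v hv u hu h; nlinarith
    · obtain ⟨h1, h2⟩ := hM v hv u hu h; nlinarith
  have hcheb := weighted_chebyshev 𝒰 p a b
    (fun u _ => ENNReal.toReal_nonneg) hsum_p hco
  rw [hsum_pb, mul_one] at hcheb
  have hfinal : δY / δD = ∑ u ∈ 𝒰, p u * (a u * b u) := by
    rw [hδY2, mul_comm, mul_div_assoc, div_self hδDne, mul_one]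
  rw [ge_iff_le, hATE, hfinal]
  exact hcheb
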